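/- Let ρ₁ : [γ₁,γ_L] → ℝ be proper and bounded below, p ∈ ℝ, ρ₂(t) := ρ₁(t) - p·t, with lifted integrands ρ̂ⱼ as in the sublabel-accurate lifting. Then the biconjugates satisfy ρ̂₂**(v) = ρ̂₁**(v) - ⟨p·γ̃, v⟩ - p·γ₁ for all v ∈ ℝˡ, where γ̃ := (γ₂-γ₁,...,γ_L-γ_{L-1}). -/

import Mathlib

open scoped BigOperators

/-- The lifted representative `𝟙ᵢ^α = α𝟙ᵢ + (1-α)𝟙_{i-1} ∈ ℝˡ` (with zero-based index `i`):
entries `1` below `i`, value `α` at `i`, `0` above. -/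
def oneVec {l : ℕ} (i : Fin l) (α : ℝ) : Fin l → ℝ :=
  fun k => if (k : ℕ) < (i : ℕ) then 1 else if k = i then α else 0

/-- The sublabel value `γᵢ^α = γᵢ + α(γ_{i+1} - γᵢ)` (zero-based index `i`). -/
def gam {l : ℕ} (γ : Fin (l + 1) → ℝ) (i : Fin l) (α : ℝ) : ℝ :=
  γ i.castSucc + α * (γ i.succ - γ i.castSucc)

/-- The lifted integrand `ρ̂(v) = inf_{i,α} ( ρ(γᵢ^α) + δ_{𝟙ᵢ^α}(v) )`. -/
noncomputable def liftInf {l : ℕ} (γ : Fin (l + 1) → ℝ) (ρ : ℝ → ℝ) (v : Fin l → ℝ) : EReal :=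
  ⨅ (i : Fin l) (α : ℝ) (_ : α ∈ Set.Icc (0 : ℝ) 1 ∧ v = oneVec i α),
    ((ρ (gam γ i α) : ℝ) : EReal)

/-- Fenchel conjugate of an extended-real-valued function on ℝˡ. -/
noncomputable def fenchelConj {l : ℕ} (f : (Fin l → ℝ) → EReal) (w : Fin l → ℝ) : EReal :=
  ⨆ v : Fin l → ℝ, (((∑ k, w k * v k : ℝ) : EReal) - f v)

namespace SLHelp

noncomputable def addIso (c : ℝ) : EReal ≃o EReal where
  toFun x := x + (c : EReal)
  invFun x := x - (c : EReal)
  left_inv x := EReal.add_sub_cancel_right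
  right_inv x := EReal.sub_add_cancel
  map_rel_iff' := by
    intro a b
    exact (EReal.addLECancellable_coe c).add_le_add_iff_right

lemma iSup_add_const {ι : Sort*} (f : ι → EReal) (c : ℝ) :
    (⨆ i, (f i + (c : EReal))) = (⨆ i, f i) + (c : EReal) :=
  ((addIso c).map_iSup f).symm

lemma iInf_sub_const {ι : Sort*} (f : ι → EReal) (c : ℝ) :
    (⨅ i, (f i - (c : EReal))) = (⨅ i, f i) - (c : EReal) := by
  have h : ∀ x : EReal, x - (c : EReal) = x + ((-c : ℝ) : EReal) := by
    intro x; rw [sub_eq_add_neg, ← EReal.coe_neg]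
  simp_rw [h]
  exact ((addIso (-c)).map_iInf f).symm

lemma iSup_sub_const {ι : Sort*} (f : ι → EReal) (c : ℝ) :
    (⨆ i, (f i - (c : EReal))) = (⨆ i, f i) - (c : EReal) := by
  have h : ∀ x : EReal, x - (c : EReal) = x + ((-c : ℝ) : EReal) := by
    intro x; rw [sub_eq_add_neg, ← EReal.coe_neg]
  simp_rw [h]
  exact ((addIso (-c)).map_iSup f).symm

lemma coe_sub_sub_coe (x z : ℝ) (y : EReal) :
    (x : EReal) - (y - (z : EReal)) = ((x + z : ℝ) : EReal) - y := by
  induction y with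
  | bot => simp [← EReal.coe_add, ← EReal.coe_sub, EReal.sub_top, EReal.coe_sub_bot, EReal.top_sub_coe, EReal.bot_sub]
  | coe r => norm_cast; ring
  | top => simp [← EReal.coe_add, ← EReal.coe_sub, EReal.sub_top, EReal.coe_sub_bot, EReal.top_sub_coe, EReal.bot_sub]

lemma coe_add_sub (x z : ℝ) (y : EReal) :
    ((x + z : ℝ) : EReal) - y = ((x : EReal) - y) + (z : EReal) := by
  induction y with
  | bot => simp [← EReal.coe_add, ← EReal.coe_sub, EReal.sub_top, EReal.coe_sub_bot, EReal.top_sub_coe, EReal.bot_sub]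
  | coe r => norm_cast; ring
  | top => simp [← EReal.coe_add, ← EReal.coe_sub, EReal.sub_top, EReal.coe_sub_bot, EReal.top_sub_coe, EReal.bot_sub]

lemma coe_sub_add (x z : ℝ) (y : EReal) :
    (x : EReal) - (y + (z : EReal)) = ((x - z : ℝ) : EReal) - y := by
  induction y with
  | bot => simp [← EReal.coe_add, ← EReal.coe_sub, EReal.sub_top, EReal.coe_sub_bot, EReal.top_sub_coe, EReal.bot_sub]
  | coe r => norm_cast; ring
  | top => simp [← EReal.coe_add, ← EReal.coe_sub, EReal.sub_top, EReal.coe_sub_bot, EReal.top_sub_coe, EReal.bot_sub]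

lemma coe_sub_sub' (x z : ℝ) (y : EReal) :
    ((x - z : ℝ) : EReal) - y = ((x : EReal) - y) - (z : EReal) := by
  induction y with
  | bot => simp [← EReal.coe_add, ← EReal.coe_sub, EReal.sub_top, EReal.coe_sub_bot, EReal.top_sub_coe, EReal.bot_sub]
  | coe r => norm_cast; ring
  | top => simp [← EReal.coe_add, ← EReal.coe_sub, EReal.sub_top, EReal.coe_sub_bot, EReal.top_sub_coe, EReal.bot_sub]

lemma sub_coe_add (x : EReal) (s b : ℝ) :
    x - ((s + b : ℝ) : EReal) = x - (s : EReal) - (b : EReal) := by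
  induction x with
  | bot => simp [← EReal.coe_add, ← EReal.coe_sub, EReal.sub_top, EReal.coe_sub_bot, EReal.top_sub_coe, EReal.bot_sub]
  | coe r => norm_cast; ring
  | top => simp [← EReal.coe_add, ← EReal.coe_sub, EReal.sub_top, EReal.coe_sub_bot, EReal.top_sub_coe, EReal.bot_sub]

lemma conj_shift {l : ℕ} (f : (Fin l → ℝ) → EReal) (a : Fin l → ℝ) (b : ℝ) (w : Fin l → ℝ) :
    fenchelConj (fun v => f v - (((∑ k, a k * v k) + b : ℝ) : EReal)) w
      = fenchelConj f (w + a) + (b : EReal) := by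
  unfold fenchelConj
  rw [← iSup_add_const]
  refine iSup_congr fun v => ?_
  rw [coe_sub_sub_coe]
  have h : (∑ k, w k * v k) + ((∑ k, a k * v k) + b)
      = (∑ k, (w + a) k * v k) + b := by
    simp [add_mul, Finset.sum_add_distrib]; ring
  rw [h, coe_add_sub]

lemma biconj_shift {l : ℕ} (f : (Fin l → ℝ) → EReal) (a : Fin l → ℝ) (b : ℝ) (v : Fin l → ℝ) :
    fenchelConj (fenchelConj (fun v => f v - (((∑ k, a k * v k) + b : ℝ) : EReal))) v
      = fenchelConj (fenchelConj f) v - ((∑ k, a k * v k : ℝ) : EReal) - (b : EReal) := by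
  have h1 : fenchelConj (fun v => f v - (((∑ k, a k * v k) + b : ℝ) : EReal))
      = fun w => fenchelConj f (w + a) + (b : EReal) := funext (conj_shift f a b)
  rw [h1]
  show (⨆ u : Fin l → ℝ, (((∑ k, v k * u k : ℝ) : EReal) - (fenchelConj f (u + a) + (b : EReal))))
      = _
  have h2 : ∀ u : Fin l → ℝ,
      (((∑ k, v k * u k : ℝ) : EReal) - (fenchelConj f (u + a) + (b : EReal)))
        = (fun u => (((∑ k, v k * u k - ((∑ k, a k * v k) + b) : ℝ) : EReal) - fenchelConj f u))
            (u + a) := by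
    intro u
    rw [coe_sub_add]
    congr 2
    simp [add_mul, mul_add, Finset.sum_add_distrib]
    ring_nf
    rw [Finset.sum_congr rfl (fun k _ => mul_comm (a k) (v k))]
    ring
  simp_rw [h2]
  have hre : (⨆ u : Fin l → ℝ,
      (fun u => (((∑ k, v k * u k - ((∑ k, a k * v k) + b) : ℝ) : EReal) - fenchelConj f u))
        (u + a))
      = ⨆ u : Fin l → ℝ,
      (((∑ k, v k * u k - ((∑ k, a k * v k) + b) : ℝ) : EReal) - fenchelConj f u) :=
    (Equiv.addRight a).iSup_comp
      (g := fun u => (((∑ k, v k * u k - ((∑ k, a k * v k) + b) : ℝ) : EReal) - fenchelConj f u))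
  rw [hre]
  simp_rw [coe_sub_sub', sub_coe_add]
  rw [iSup_sub_const, iSup_sub_const]
  rfl

lemma telescope {l : ℕ} (γ : Fin (l + 1) → ℝ) (i : Fin l) :
    (∑ k : Fin l, (if (k : ℕ) < (i : ℕ) then (γ k.succ - γ k.castSucc) else 0))
      = γ i.castSucc - γ 0 := by
  set g : ℕ → ℝ := fun n => γ ⟨min n l, by omega⟩ with hg
  have key : ∀ k : Fin l, (if (k : ℕ) < (i : ℕ) then (γ k.succ - γ k.castSucc) else 0)
      = (fun n => if n < (i : ℕ) then g (n + 1) - g n else 0) (k : ℕ) := by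
    intro k
    by_cases h : (k : ℕ) < (i : ℕ)
    · simp only [h, if_true, hg]
      have e1 : (⟨min ((k : ℕ) + 1) l, by omega⟩ : Fin (l + 1)) = k.succ :=
        Fin.ext (by simp [min_eq_left (by omega : (k : ℕ) + 1 ≤ l)])
      have e2 : (⟨min (k : ℕ) l, by omega⟩ : Fin (l + 1)) = k.castSucc :=
        Fin.ext (by simp [min_eq_left (by omega : (k : ℕ) ≤ l)])
      rw [e1, e2]
    · simp [h]
  rw [Finset.sum_congr rfl (fun k _ => key k),
    Fin.sum_univ_eq_sum_range (fun n => if n < (i : ℕ) then g (n + 1) - g n else 0) l,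
    ← Finset.sum_filter]
  have hfil : (Finset.range l).filter (fun n => n < (i : ℕ)) = Finset.range (i : ℕ) := by
    ext n; simp only [Finset.mem_filter, Finset.mem_range]; omega
  rw [hfil, Finset.sum_range_sub g (i : ℕ)]
  have e3 : (⟨min (i : ℕ) l, by omega⟩ : Fin (l + 1)) = i.castSucc :=
    Fin.ext (by simp [min_eq_left (by omega : (i : ℕ) ≤ l)])
  have e4 : (⟨min 0 l, by omega⟩ : Fin (l + 1)) = 0 := Fin.ext (by simp)
  simp only [hg]
  rw [e3, e4]

end SLHelp

namespace SLHelp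

lemma sum_oneVec {l : ℕ} (γ : Fin (l + 1) → ℝ) (p : ℝ) (i : Fin l) (α : ℝ) :
    (∑ k : Fin l, p * (γ k.succ - γ k.castSucc) * oneVec i α k) + p * γ 0
      = p * gam γ i α := by
  have step : ∀ k : Fin l, p * (γ k.succ - γ k.castSucc) * oneVec i α k
      = p * (if (k : ℕ) < (i : ℕ) then (γ k.succ - γ k.castSucc) else 0)
        + (if k = i then α * (p * (γ k.succ - γ k.castSucc)) else 0) := by
    intro k
    by_cases h1 : (k : ℕ) < (i : ℕ)
    · have h2 : k ≠ i := by intro h; subst h; omega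
      simp [oneVec, h1, h2]
    · by_cases h2 : k = i
      · subst h2; simp [oneVec, h1]; ring
      · simp [oneVec, h1, h2]
  rw [Finset.sum_congr rfl (fun k _ => step k), Finset.sum_add_distrib, ← Finset.mul_sum,
    telescope γ i, Finset.sum_ite_eq' Finset.univ i
      (fun k => α * (p * (γ k.succ - γ k.castSucc)))]
  simp only [Finset.mem_univ, if_true]
  unfold gam; ring

lemma liftInf_shift {l : ℕ} (γ : Fin (l + 1) → ℝ) (ρ₁ : ℝ → ℝ) (p : ℝ) (ρ₂ : ℝ → ℝ)
    (hρ₂ : ∀ t, ρ₂ t = ρ₁ t - p * t) :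
    liftInf γ ρ₂ = fun v => liftInf γ ρ₁ v
      - (((∑ k, p * (γ k.succ - γ k.castSucc) * v k) + p * γ 0 : ℝ) : EReal) := by
  funext v
  unfold liftInf
  have hcong : ∀ (i : Fin l) (α : ℝ) (_ : α ∈ Set.Icc (0 : ℝ) 1 ∧ v = oneVec i α),
      ((ρ₂ (gam γ i α) : ℝ) : EReal)
        = ((ρ₁ (gam γ i α) : ℝ) : EReal)
            - (((∑ k, p * (γ k.succ - γ k.castSucc) * v k) + p * γ 0 : ℝ) : EReal) := by
    intro i α h
    rw [← EReal.coe_sub]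
    congr 1
    rw [hρ₂, h.2]
    rw [sum_oneVec γ p i α]
  calc (⨅ (i : Fin l) (α : ℝ) (_ : α ∈ Set.Icc (0 : ℝ) 1 ∧ v = oneVec i α),
        ((ρ₂ (gam γ i α) : ℝ) : EReal))
      = ⨅ (i : Fin l) (α : ℝ) (_ : α ∈ Set.Icc (0 : ℝ) 1 ∧ v = oneVec i α),
        (((ρ₁ (gam γ i α) : ℝ) : EReal)
          - (((∑ k, p * (γ k.succ - γ k.castSucc) * v k) + p * γ 0 : ℝ) : EReal)) :=
        iInf_congr fun i => iInf_congr fun α => iInf_congr fun h => hcong i α h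
    _ = _ := by simp_rw [iInf_sub_const]

end SLHelp

theorem lifted_biconjugate_sub_linear {l : ℕ}
    (γ : Fin (l + 1) → ℝ) (hγ : StrictMono γ)
    (ρ₁ : ℝ → ℝ) (hbdd : ∃ c : ℝ, ∀ t ∈ Set.Icc (γ 0) (γ (Fin.last l)), c ≤ ρ₁ t)
    (p : ℝ) (ρ₂ : ℝ → ℝ) (hρ₂ : ∀ t, ρ₂ t = ρ₁ t - p * t) :
    ∀ v : Fin l → ℝ,
      fenchelConj (fenchelConj (liftInf γ ρ₂)) v
        = fenchelConj (fenchelConj (liftInf γ ρ₁)) v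
            - ((∑ k : Fin l, p * (γ k.succ - γ k.castSucc) * v k : ℝ) : EReal)
            - ((p * γ 0 : ℝ) : EReal) := by
  intro v
  rw [SLHelp.liftInf_shift γ ρ₁ p ρ₂ hρ₂]
  exact SLHelp.biconj_shift (liftInf γ ρ₁)
    (fun k => p * (γ k.succ - γ k.castSucc)) (p * γ 0) v
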